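/- In the two-qubit system with agents Alice and Bob, commands {R_x(θ), CNOT}, initial state |00⟩⟨00|, where Alice's R_x(θ) applies R_x(θ) ⊗ I, Bob's R_x(θ) applies I ⊗ R_x(θ), both agents' CNOT applies the controlled-NOT with the first qubit as control and the second as target, Alice's POVM set contains only the computational-basis measurement on the first qubit, and Bob's contains only the computational-basis measurement on the second qubit: Alice with the command R_x(θ) interferes with Bob by at least sin²(θ/2); i.e. Int({Alice}, {R_x(θ)} | {Bob}) ≥ sin²(θ/2). In particular, for 0 < θ < 2π, Int({Alice}, {R_x(θ)} | {Bob}) > 0. -/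

import Mathlib

open scoped Classical ComplexOrder
open Matrix Kronecker

noncomputable section

/-- A density operator: positive semidefinite with trace 1. -/
def IsDensity {d : Type} [Fintype d] [DecidableEq d] (ρ : Matrix d d ℂ) : Prop :=
  ρ.PosSemidef ∧ ρ.trace = 1

/-- A super-operator: a linear, positive, trace-preserving map on matrices. -/
def IsSuperOp {d : Type} [Fintype d] [DecidableEq d]
    (F : Matrix d d ℂ → Matrix d d ℂ) : Prop :=
  IsLinearMap ℂ F ∧ (∀ ρ : Matrix d d ℂ, ρ.PosSemidef → (F ρ).PosSemidef) ∧
    (∀ ρ : Matrix d d ℂ, (F ρ).trace = ρ.trace)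

/-- A finite family of matrices (the data of a measurement). -/
structure PMeas (d : Type) where
  m : ℕ
  E : Fin m → Matrix d d ℂ

/-- The family is a POVM: positive semidefinite elements summing to the identity. -/
def PMeas.IsPOVM {d : Type} [Fintype d] [DecidableEq d] (P : PMeas d) : Prop :=
  (∀ i, (P.E i).PosSemidef) ∧ ∑ i, P.E i = 1

/-- The distance between outcome distributions of a measurement on two states. -/
def dE {d : Type} [Fintype d] (P : PMeas d) (ρ σ : Matrix d d ℂ) : ℝ :=
  (1 / 2) * ∑ i, ‖(P.E i * ρ).trace - (P.E i * σ).trace‖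

/-- The measurement pseudo-distance induced by a set of measurements. -/
def dM {d : Type} [Fintype d] (M : Set (PMeas d)) (ρ σ : Matrix d d ℂ) : ℝ :=
  sSup { x | ∃ P ∈ M, x = dE P ρ σ }

/-- A quantum system: initial state, agents, commands, super-operators, measurements. -/
structure QSystem (Agent Cmd d : Type) where
  ρ0 : Matrix d d ℂ
  A : Set Agent
  C : Set Cmd
  Ecmd : Agent → Cmd → Matrix d d ℂ → Matrix d d ℂ
  M : Agent → Set (PMeas d)

/-- Well-formedness: the initial state is a density operator, commands act as
super-operators, and agents measure with POVMs. -/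
def QSystem.WellFormed {Agent Cmd d : Type} [Fintype d] [DecidableEq d]
    (S : QSystem Agent Cmd d) : Prop :=
  IsDensity S.ρ0 ∧ (∀ a ∈ S.A, ∀ c ∈ S.C, IsSuperOp (S.Ecmd a c)) ∧
    (∀ a ∈ S.A, ∀ P ∈ S.M a, P.IsPOVM)

/-- Execution of a finite action sequence (composition of super-operators, in order). -/
def QSystem.run {Agent Cmd d : Type} (S : QSystem Agent Cmd d)
    (α : List (Agent × Cmd)) (ρ : Matrix d d ℂ) : Matrix d d ℂ :=
  α.foldl (fun τ p => S.Ecmd p.1 p.2 τ) ρ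

/-- A sequence over A × C. -/
def QSystem.Valid {Agent Cmd d : Type} (S : QSystem Agent Cmd d)
    (α : List (Agent × Cmd)) : Prop :=
  ∀ p ∈ α, p.1 ∈ S.A ∧ p.2 ∈ S.C

/-- `purge G D α` deletes from `α` every pair `(a, c)` with `a ∈ G` and `c ∈ D`. -/
def purge {Agent Cmd : Type} (G : Set Agent) (D : Set Cmd) :
    List (Agent × Cmd) → List (Agent × Cmd)
  | [] => []
  | p :: rest => if p.1 ∈ G ∧ p.2 ∈ D then purge G D rest else p :: purge G D rest

/-- A reachable density operator. -/
def QSystem.Reachable {Agent Cmd d : Type} (S : QSystem Agent Cmd d)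
    (ρ : Matrix d d ℂ) : Prop :=
  ∃ α, S.Valid α ∧ S.run α S.ρ0 = ρ

/-- `∇ a`: the set of agents from which information may not flow to `a`. -/
def nabla {Agent : Type} (pol : Agent → Agent → Prop) (a : Agent) : Set Agent :=
  { b | ¬ pol b a }

/-- The security degree `K(𝕊,↝)`. -/
def Kdeg {Agent Cmd d : Type} [Fintype d] (S : QSystem Agent Cmd d)
    (pol : Agent → Agent → Prop) : ℝ :=
  sSup { x | ∃ a ∈ S.A, ∃ α, S.Valid α ∧
    x = dM (S.M a) (S.run α S.ρ0) (S.run (purge (nabla pol a) Set.univ α) S.ρ0) }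

/-- The `t`-bounded security degree `K_t(𝕊,↝)`. -/
def Kt {Agent Cmd d : Type} [Fintype d] (S : QSystem Agent Cmd d)
    (pol : Agent → Agent → Prop) (t : ℕ) : ℝ :=
  sSup { x | ∃ a ∈ S.A, ∃ α, S.Valid α ∧ α.length ≤ t ∧
    x = dM (S.M a) (S.run α S.ρ0) (S.run (purge (nabla pol a) Set.univ α) S.ρ0) }

/-- The interference degree `Int(G₁, D | G₂)`. -/
def IntDeg {Agent Cmd d : Type} [Fintype d] (S : QSystem Agent Cmd d)
    (G1 : Set Agent) (D : Set Cmd) (G2 : Set Agent) : ℝ :=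
  sSup { x | ∃ a ∈ G2, ∃ α, S.Valid α ∧
    x = dM (S.M a) (S.run α S.ρ0) (S.run (purge G1 D α) S.ρ0) }

/-- The square root of a positive semidefinite matrix, as `Matrix.PosSemidef.sqrt` was defined. -/
def psdSqrt {d : Type} [Fintype d] [DecidableEq d] {A : Matrix d d ℂ} (hA : A.PosSemidef) :
    Matrix d d ℂ :=
  (hA.1.eigenvectorUnitary : Matrix d d ℂ) * Matrix.diagonal ((↑) ∘ Real.sqrt ∘ hA.1.eigenvalues) *
    (star hA.1.eigenvectorUnitary : Matrix d d ℂ)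

/-- Trace distance `d(ρ,σ) = (1/2)·tr √((ρ−σ)†(ρ−σ))`. -/
def traceDist {d : Type} [Fintype d] [DecidableEq d] (ρ σ : Matrix d d ℂ) : ℝ :=
  (1 / 2) * ((psdSqrt (Matrix.posSemidef_conjTranspose_mul_self (ρ - σ))).trace).re

end
noncomputable section

/-- The two agents Alice and Bob. -/
inductive Ag : Type
  | alice : Ag
  | bob : Ag
deriving DecidableEq

/-- The two commands: the rotation `R_x(θ)` and the controlled-NOT. -/
inductive Cm : Type
  | rx : Cm
  | cnot : Cm
deriving DecidableEq

/-- The rotation about the x-axis of the Bloch sphere. -/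
def Rx (θ : ℝ) : Matrix (Fin 2) (Fin 2) ℂ :=
  !![(Real.cos (θ / 2) : ℂ), -Complex.I * (Real.sin (θ / 2) : ℂ);
     -Complex.I * (Real.sin (θ / 2) : ℂ), (Real.cos (θ / 2) : ℂ)]

/-- The controlled-NOT gate with the first qubit as control: `|i,k⟩ ↦ |i, k + i⟩`. -/
def CNOT : Matrix (Fin 2 × Fin 2) (Fin 2 × Fin 2) ℂ :=
  Matrix.of fun p q => if p.1 = q.1 ∧ p.2 = q.2 + q.1 then 1 else 0

/-- The super-operator `ρ ↦ U ρ U†` of a unitary `U`. -/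
def conjOp {d : Type} [Fintype d] (U : Matrix d d ℂ) :
    Matrix d d ℂ → Matrix d d ℂ :=
  fun ρ => U * ρ * Uᴴ

/-- The projection `|i⟩⟨i|` on one qubit. -/
def proj (i : Fin 2) : Matrix (Fin 2) (Fin 2) ℂ := Matrix.single i i 1

/-- The computational-basis measurement on the first qubit. -/
def measFst : PMeas (Fin 2 × Fin 2) where
  m := 2
  E := fun i => proj i ⊗ₖ (1 : Matrix (Fin 2) (Fin 2) ℂ)

/-- The computational-basis measurement on the second qubit. -/
def measSnd : PMeas (Fin 2 × Fin 2) where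
  m := 2
  E := fun i => (1 : Matrix (Fin 2) (Fin 2) ℂ) ⊗ₖ proj i

/-- The basis vector `|00⟩` of the two-qubit space. -/
def ket00 : (Fin 2 × Fin 2) → ℂ := fun p => if p = (0, 0) then 1 else 0

/-- The two-qubit system of Example 3.1: initial state `|00⟩⟨00|`; Alice's `R_x(θ)`
acts on the first qubit, Bob's on the second; both agents' CNOT has the first qubit as
control and the second as target; Alice measures the first qubit in the computational
basis, Bob the second. -/
def twoQubitSys (θ : ℝ) : QSystem Ag Cm (Fin 2 × Fin 2) where
  ρ0 := Matrix.vecMulVec ket00 (star ket00)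
  A := Set.univ
  C := Set.univ
  Ecmd := fun a c =>
    match a, c with
    | Ag.alice, Cm.rx => conjOp (Rx θ ⊗ₖ (1 : Matrix (Fin 2) (Fin 2) ℂ))
    | Ag.bob, Cm.rx => conjOp ((1 : Matrix (Fin 2) (Fin 2) ℂ) ⊗ₖ Rx θ)
    | _, Cm.cnot => conjOp CNOT
  M := fun a =>
    match a with
    | Ag.alice => {measFst}
    | Ag.bob => {measSnd}

end
noncomputable section

namespace AliceAux

open Complex

lemma conjOp_vecMulVec {d : Type} [Fintype d] [DecidableEq d] (U : Matrix d d ℂ) (v : d → ℂ) :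
    conjOp U (Matrix.vecMulVec v (star v)) =
      Matrix.vecMulVec (U *ᵥ v) (star (U *ᵥ v)) := by
  ext p q
  simp only [conjOp, Matrix.mul_apply, Matrix.vecMulVec_apply, Matrix.conjTranspose_apply,
    Pi.star_apply, Matrix.mulVec, dotProduct, Finset.sum_mul, Finset.mul_sum,
    star_sum, star_mul']
  apply Finset.sum_congr rfl
  intro s _
  apply Finset.sum_congr rfl
  intro r _
  ring

lemma Rx_conjT_mul (θ : ℝ) : (Rx θ)ᴴ * Rx θ = 1 := by
  have h : (Real.cos (θ / 2) : ℂ) ^ 2 + (Real.sin (θ / 2) : ℂ) ^ 2 = 1 := by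
    have hr := Real.sin_sq_add_cos_sq (θ / 2)
    norm_cast
    linarith
  ext i j
  fin_cases i <;> fin_cases j <;>
    simp [Rx, Matrix.mul_apply, Fin.sum_univ_two, Matrix.one_apply, Complex.conj_ofReal,
      Complex.conj_I, -Complex.ofReal_cos, -Complex.ofReal_sin] <;>
    first
      | linear_combination h - (Real.sin (θ / 2) : ℂ) ^ 2 * Complex.I_sq
      | ring

lemma CNOT_conjT_mul : CNOTᴴ * CNOT = 1 := by
  ext ⟨a, b⟩ ⟨c, e⟩
  fin_cases a <;> fin_cases b <;> fin_cases c <;> fin_cases e <;>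
    simp [CNOT, Matrix.mul_apply, Matrix.conjTranspose_apply, Fintype.sum_prod_type,
      Fin.sum_univ_two, Matrix.one_apply, Prod.ext_iff]

lemma kron_conjT (A B : Matrix (Fin 2) (Fin 2) ℂ) :
    (A ⊗ₖ B)ᴴ = Aᴴ ⊗ₖ Bᴴ := by
  ext p q
  simp [Matrix.conjTranspose_apply, Matrix.kroneckerMap_apply, mul_comm]

lemma RxK_conjT_mul (θ : ℝ) :
    (Rx θ ⊗ₖ (1 : Matrix (Fin 2) (Fin 2) ℂ))ᴴ * (Rx θ ⊗ₖ (1 : Matrix (Fin 2) (Fin 2) ℂ)) = 1 := by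
  rw [kron_conjT, Matrix.conjTranspose_one, ← Matrix.mul_kronecker_mul, Rx_conjT_mul,
    Matrix.one_mul, Matrix.one_kronecker_one]

lemma KRx_conjT_mul (θ : ℝ) :
    ((1 : Matrix (Fin 2) (Fin 2) ℂ) ⊗ₖ Rx θ)ᴴ * ((1 : Matrix (Fin 2) (Fin 2) ℂ) ⊗ₖ Rx θ) = 1 := by
  rw [kron_conjT, Matrix.conjTranspose_one, ← Matrix.mul_kronecker_mul, Rx_conjT_mul,
    Matrix.one_mul, Matrix.one_kronecker_one]

lemma isDensity_conjOp {U ρ : Matrix (Fin 2 × Fin 2) (Fin 2 × Fin 2) ℂ}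
    (hU : Uᴴ * U = 1) (hρ : IsDensity ρ) : IsDensity (conjOp U ρ) := by
  refine ⟨hρ.1.mul_mul_conjTranspose_same U, ?_⟩
  unfold conjOp
  rw [Matrix.trace_mul_cycle, hU, Matrix.one_mul, hρ.2]

lemma isDensity_rho0 : IsDensity (Matrix.vecMulVec ket00 (star ket00)) := by
  constructor
  · refine Matrix.PosSemidef.of_dotProduct_mulVec_nonneg ?_ ?_
    · ext p q
      by_cases hp : p = 0 <;> by_cases hq : q = 0 <;>
        simp [Matrix.conjTranspose_apply, Matrix.vecMulVec_apply, ket00, hp, hq,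
          show ((0, 0) : Fin 2 × Fin 2) = 0 from rfl]
    · intro x
      have hx : star x ⬝ᵥ Matrix.vecMulVec ket00 (star ket00) *ᵥ x
          = star (x (0, 0)) * x (0, 0) := by
        simp [dotProduct, Matrix.mulVec, Matrix.vecMulVec_apply, ket00,
          Fintype.sum_prod_type, Fin.sum_univ_two]
        try ring
      rw [hx]
      exact star_mul_self_nonneg _
  · simp [Matrix.trace, Matrix.diag, Matrix.vecMulVec_apply, ket00,
      Fintype.sum_prod_type, Fin.sum_univ_two]

lemma run_isDensity (θ : ℝ) (α : List (Ag × Cm)) {ρ : Matrix (Fin 2 × Fin 2) (Fin 2 × Fin 2) ℂ}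
    (hρ : IsDensity ρ) : IsDensity ((twoQubitSys θ).run α ρ) := by
  induction α generalizing ρ with
  | nil => exact hρ
  | cons p rest ih =>
      have hstep : IsDensity ((twoQubitSys θ).Ecmd p.1 p.2 ρ) := by
        rcases p with ⟨a, c⟩
        cases a <;> cases c <;>
          first
          | exact isDensity_conjOp (RxK_conjT_mul θ) hρ
          | exact isDensity_conjOp (KRx_conjT_mul θ) hρ
          | exact isDensity_conjOp CNOT_conjT_mul hρ
      exact ih hstep

lemma diag_nonneg {ρ : Matrix (Fin 2 × Fin 2) (Fin 2 × Fin 2) ℂ} (hρ : IsDensity ρ)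
    (p : Fin 2 × Fin 2) : 0 ≤ ρ p p := by
  have := hρ.1.dotProduct_mulVec_nonneg (Pi.single p 1)
  simpa [dotProduct, Matrix.mulVec, Pi.single_apply,
    Fintype.sum_prod_type, Fin.sum_univ_two] using this

lemma trace_measSnd_mul (i : Fin 2) (ρ : Matrix (Fin 2 × Fin 2) (Fin 2 × Fin 2) ℂ) :
    (((1 : Matrix (Fin 2) (Fin 2) ℂ) ⊗ₖ proj i) * ρ).trace
      = ρ (0, i) (0, i) + ρ (1, i) (1, i) := by
  fin_cases i <;>
    simp [proj, Matrix.trace, Matrix.diag, Matrix.mul_apply,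
      Matrix.kroneckerMap_apply, Matrix.single, Matrix.one_apply,
      Fintype.sum_prod_type, Fin.sum_univ_two]

lemma sum_two_diag_mem {ρ : Matrix (Fin 2 × Fin 2) (Fin 2 × Fin 2) ℂ} (hρ : IsDensity ρ)
    (i : Fin 2) :
    (ρ (0, i) (0, i) + ρ (1, i) (1, i)).im = 0 ∧
      0 ≤ (ρ (0, i) (0, i) + ρ (1, i) (1, i)).re ∧
      (ρ (0, i) (0, i) + ρ (1, i) (1, i)).re ≤ 1 := by
  have h := fun p => diag_nonneg hρ p
  have him : ∀ p, (ρ p p).im = 0 := fun p => ((Complex.le_def.mp (h p)).2).symm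
  have hre : ∀ p, 0 ≤ (ρ p p).re := fun p => (Complex.le_def.mp (h p)).1
  have htr : (ρ (0, 0) (0, 0) + ρ (0, 1) (0, 1) + (ρ (1, 0) (1, 0) + ρ (1, 1) (1, 1))) = 1 := by
    have := hρ.2
    simpa [Matrix.trace, Matrix.diag, Fintype.sum_prod_type, Fin.sum_univ_two] using this
  have htr' := congrArg Complex.re htr
  simp only [Complex.add_re, Complex.one_re] at htr'
  refine ⟨by simp [Complex.add_im, him], ?_, ?_⟩
  · simp only [Complex.add_re]
    have h1 := hre (0, i); have h2 := hre (1, i); linarith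
  · simp only [Complex.add_re]
    fin_cases i <;> simp only [Fin.zero_eta, Fin.mk_one] <;>
      linarith [hre (0, 0), hre (0, 1), hre (1, 0), hre (1, 1)]

lemma dE_measSnd_eq (ρ σ : Matrix (Fin 2 × Fin 2) (Fin 2 × Fin 2) ℂ) :
    dE measSnd ρ σ = (1 / 2) *
      (‖(((1 : Matrix (Fin 2) (Fin 2) ℂ) ⊗ₖ proj 0) * ρ).trace
          - (((1 : Matrix (Fin 2) (Fin 2) ℂ) ⊗ₖ proj 0) * σ).trace‖
        + ‖(((1 : Matrix (Fin 2) (Fin 2) ℂ) ⊗ₖ proj 1) * ρ).trace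
          - (((1 : Matrix (Fin 2) (Fin 2) ℂ) ⊗ₖ proj 1) * σ).trace‖) := by
  show (1 / 2) * (∑ i : Fin 2,
      ‖(((1 : Matrix (Fin 2) (Fin 2) ℂ) ⊗ₖ proj i) * ρ).trace
        - (((1 : Matrix (Fin 2) (Fin 2) ℂ) ⊗ₖ proj i) * σ).trace‖) = _
  rw [Fin.sum_univ_two]

lemma dE_measSnd_le_one {ρ σ : Matrix (Fin 2 × Fin 2) (Fin 2 × Fin 2) ℂ}
    (hρ : IsDensity ρ) (hσ : IsDensity σ) : dE measSnd ρ σ ≤ 1 := by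
  have key : ∀ i : Fin 2,
      ‖(((1 : Matrix (Fin 2) (Fin 2) ℂ) ⊗ₖ proj i) * ρ).trace
        - (((1 : Matrix (Fin 2) (Fin 2) ℂ) ⊗ₖ proj i) * σ).trace‖ ≤ 1 := by
    intro i
    rw [trace_measSnd_mul, trace_measSnd_mul]
    obtain ⟨hρim, hρ0, hρ1⟩ := sum_two_diag_mem hρ i
    obtain ⟨hσim, hσ0, hσ1⟩ := sum_two_diag_mem hσ i
    set a := ρ (0, i) (0, i) + ρ (1, i) (1, i)
    set b := σ (0, i) (0, i) + σ (1, i) (1, i)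
    have hab : a - b = ((a.re - b.re : ℝ) : ℂ) := by
      apply Complex.ext <;> simp [hρim, hσim]
    rw [hab, Complex.norm_real, Real.norm_eq_abs]
    rw [abs_le]
    constructor <;> linarith
  rw [dE_measSnd_eq]
  have h0 := key 0
  have h1 := key 1
  linarith

lemma dM_singleton (P : PMeas (Fin 2 × Fin 2)) (ρ σ : Matrix (Fin 2 × Fin 2) (Fin 2 × Fin 2) ℂ) :
    dM {P} ρ σ = dE P ρ σ := by
  unfold dM
  have : {x | ∃ P' ∈ ({P} : Set (PMeas (Fin 2 × Fin 2))), x = dE P' ρ σ} = {dE P ρ σ} := by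
    ext x; simp
  rw [this, csSup_singleton]

end AliceAux

/-- **Claim 3 of Example 3.1.** In the two-qubit system, Alice with the command
`R_x(θ)` interferes with Bob by at least `sin²(θ/2)`:
`Int({Alice}, {R_x(θ)} | {Bob}) ≥ sin²(θ/2)`; in particular for `0 < θ < 2π` the
interference degree is strictly positive. -/
theorem alice_rx_interferes_with_bob (θ : ℝ) :
    Real.sin (θ / 2) ^ 2 ≤ IntDeg (twoQubitSys θ) {Ag.alice} {Cm.rx} {Ag.bob} ∧
    (0 < θ → θ < 2 * Real.pi →
      0 < IntDeg (twoQubitSys θ) {Ag.alice} {Cm.rx} {Ag.bob}) := by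
  open AliceAux in
  set c : ℝ := Real.cos (θ / 2) with hc
  set s : ℝ := Real.sin (θ / 2) with hs
  set α : List (Ag × Cm) := [(Ag.alice, Cm.rx), (Ag.alice, Cm.cnot)] with hα
  set wf : (Fin 2 × Fin 2) → ℂ :=
    fun p => if p = (0, 0) then (c : ℂ) else if p = (1, 1) then -Complex.I * (s : ℂ) else 0
    with hwf
  have hpurge : purge {Ag.alice} {Cm.rx} α = [(Ag.alice, Cm.cnot)] := by
    simp [purge, hα]
  have hrho0 : (twoQubitSys θ).ρ0 = Matrix.vecMulVec ket00 (star ket00) := rfl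
  have hmv1 : CNOT *ᵥ ((Rx θ ⊗ₖ (1 : Matrix (Fin 2) (Fin 2) ℂ)) *ᵥ ket00) = wf := by
    funext p
    rcases p with ⟨a, b⟩
    fin_cases a <;> fin_cases b <;>
      simp [Matrix.mulVec, dotProduct, CNOT, Rx, ket00, Matrix.kroneckerMap_apply,
        Matrix.one_apply, Fintype.sum_prod_type, Fin.sum_univ_two, hwf, Prod.ext_iff, hc, hs,
        -Complex.ofReal_cos, -Complex.ofReal_sin]
  have hmv2 : CNOT *ᵥ ket00 = ket00 := by
    funext p
    rcases p with ⟨a, b⟩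
    fin_cases a <;> fin_cases b <;>
      simp [Matrix.mulVec, dotProduct, CNOT, ket00,
        Fintype.sum_prod_type, Fin.sum_univ_two, Prod.ext_iff]
  have hrunfull : (twoQubitSys θ).run α (twoQubitSys θ).ρ0 = Matrix.vecMulVec wf (star wf) := by
    show conjOp CNOT (conjOp (Rx θ ⊗ₖ (1 : Matrix (Fin 2) (Fin 2) ℂ))
        (Matrix.vecMulVec ket00 (star ket00))) = _
    rw [conjOp_vecMulVec, conjOp_vecMulVec, hmv1]
  have hrunpurge : (twoQubitSys θ).run (purge {Ag.alice} {Cm.rx} α) (twoQubitSys θ).ρ0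
      = Matrix.vecMulVec ket00 (star ket00) := by
    rw [hpurge]
    show conjOp CNOT (Matrix.vecMulVec ket00 (star ket00)) = _
    rw [conjOp_vecMulVec, hmv2]
  have hc2s2 : s ^ 2 + c ^ 2 = 1 := Real.sin_sq_add_cos_sq (θ / 2)
  have hdE : dE measSnd (Matrix.vecMulVec wf (star wf)) (Matrix.vecMulVec ket00 (star ket00))
      = s ^ 2 := by
    rw [AliceAux.dE_measSnd_eq]
    rw [trace_measSnd_mul, trace_measSnd_mul, trace_measSnd_mul, trace_measSnd_mul]
    simp only [Matrix.vecMulVec_apply, Pi.star_apply, hwf, ket00]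
    norm_num [Prod.ext_iff]
    have h0 : (c : ℂ) * (c : ℂ) - 1 = (((c ^ 2 - 1 : ℝ)) : ℂ) := by
      push_cast; ring
    rw [h0, Complex.norm_real, Real.norm_eq_abs, abs_of_nonpos (by nlinarith)]
    nlinarith
  have hbdd : BddAbove { x | ∃ a ∈ ({Ag.bob} : Set Ag), ∃ β, (twoQubitSys θ).Valid β ∧
      x = dM ((twoQubitSys θ).M a) ((twoQubitSys θ).run β (twoQubitSys θ).ρ0)
        ((twoQubitSys θ).run (purge {Ag.alice} {Cm.rx} β) (twoQubitSys θ).ρ0) } := by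
    refine ⟨1, fun x hx => ?_⟩
    obtain ⟨a, ha, β, _, hxeq⟩ := hx
    rw [Set.mem_singleton_iff] at ha
    subst ha
    have hMeq : (twoQubitSys θ).M Ag.bob = {measSnd} := rfl
    rw [hxeq, hMeq, dM_singleton]
    exact dE_measSnd_le_one (run_isDensity θ β (hrho0 ▸ isDensity_rho0))
      (run_isDensity θ _ (hrho0 ▸ isDensity_rho0))
  have hmem : s ^ 2 ∈ { x | ∃ a ∈ ({Ag.bob} : Set Ag), ∃ β, (twoQubitSys θ).Valid β ∧
      x = dM ((twoQubitSys θ).M a) ((twoQubitSys θ).run β (twoQubitSys θ).ρ0)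
        ((twoQubitSys θ).run (purge {Ag.alice} {Cm.rx} β) (twoQubitSys θ).ρ0) } := by
    refine ⟨Ag.bob, rfl, α, fun p _ => ⟨Set.mem_univ _, Set.mem_univ _⟩, ?_⟩
    have hMeq : (twoQubitSys θ).M Ag.bob = {measSnd} := rfl
    rw [hMeq, dM_singleton, hrunfull, hrunpurge, hdE]
  have hle : s ^ 2 ≤ IntDeg (twoQubitSys θ) {Ag.alice} {Cm.rx} {Ag.bob} :=
    le_csSup hbdd hmem
  refine ⟨hle, fun hθ0 hθ2 => ?_⟩
  have hspos : 0 < s := by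
    apply Real.sin_pos_of_pos_of_lt_pi <;> [linarith; linarith]
  calc (0 : ℝ) < s ^ 2 := by positivity
    _ ≤ _ := hle

end
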